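/- arXiv:2401.17817 — 3 statements merged into one kernel-verified Lean document; each statement's English description precedes it below -/
import Mathlib

section
/- Let D be a multipartite tournament and let u and v be two non-sink vertices belonging to the same partite set of D. Then u and v do not (1,2)-compete in D if and only if N⁺(u) ∪ N⁺(v) ⊆ X for some partite set X of D. -/
/-- Adjacency in the (1,2)-step competition graph `C_{1,2}(D)` of the (simple) digraph `D`
with arc relation `A`: there is a vertex `w` distinct from `u` and `v` such that either
(`d_{D-v}(u,w) ≤ 1` and `d_{D-u}(v,w) ≤ 2`) or (`d_{D-u}(v,w) ≤ 1` and `d_{D-v}(u,w) ≤ 2`). -/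
def CompAdj {V : Type*} (A : V → V → Prop) (u v : V) : Prop :=
  u ≠ v ∧ ∃ w, w ≠ u ∧ w ≠ v ∧
    ((A u w ∧ (A v w ∨ ∃ z, z ≠ u ∧ A v z ∧ A z w)) ∨
     (A v w ∧ (A u w ∨ ∃ z, z ≠ v ∧ A u z ∧ A z w)))

/-- The (1,2)-step competition graph `C_{1,2}(D)` of the digraph with arc relation `A`. -/
def compGraph {V : Type*} (A : V → V → Prop) : SimpleGraph V where
  Adj := CompAdj A
  symm := ⟨by
    rintro u v ⟨hne, w, h1, h2, h3⟩
    exact ⟨hne.symm, w, h2, h1, h3.symm⟩⟩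
  loopless := ⟨by rintro u ⟨hne, -⟩; exact hne rfl⟩

/-- Vertices `u` and `v` `(1,2)`-compete in the digraph with arc relation `A`: there is a
vertex `w` distinct from `u` and `v` such that either (`u → w` and there is a directed path
of length 2 from `v` to `w` not traversing `u`) or vice versa. -/
def OneTwoCompete {V : Type*} (A : V → V → Prop) (u v : V) : Prop :=
  ∃ w, w ≠ u ∧ w ≠ v ∧
    ((A u w ∧ ∃ z, z ≠ u ∧ A v z ∧ A z w) ∨
     (A v w ∧ ∃ z, z ≠ v ∧ A u z ∧ A z w))

/-- `A` is an orientation of the complete multipartite graph whose parts are the fibres of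
`p : V → ι`: no arcs within a part, and exactly one arc between any two vertices in
different parts. -/
def IsCompleteMultipartiteOrientation {V ι : Type*} (A : V → V → Prop) (p : V → ι) : Prop :=
  (∀ u v : V, p u = p v → ¬ A u v) ∧
  ∀ u v : V, p u ≠ p v → (A u v ∨ A v u) ∧ ¬ (A u v ∧ A v u)

/-- A multipartite tournament: an orientation of a complete `k`-partite graph with `k ≥ 3`,
whose partite sets are the (nonempty) fibres of `p : V → ι`. -/
def IsMultipartiteTournament {V ι : Type*} [Fintype ι] (A : V → V → Prop) (p : V → ι) : Prop :=
  Function.Surjective p ∧ 3 ≤ Fintype.card ι ∧ IsCompleteMultipartiteOrientation A p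

/-- A multipartite tournament is tight if every partite set is a clique in `C_{1,2}(D)`. -/
def IsTight {V ι : Type*} (A : V → V → Prop) (p : V → ι) : Prop :=
  ∀ u v : V, u ≠ v → p u = p v → CompAdj A u v

/-- A tournament: an orientation of a complete graph. -/
def IsTournament {V : Type*} (A : V → V → Prop) : Prop :=
  (∀ u, ¬ A u u) ∧ ∀ u v : V, u ≠ v → (A u v ∨ A v u) ∧ ¬ (A u v ∧ A v u)

/-- Let `D` be a multipartite tournament and let `u` and `v` be two non-sink
vertices belonging to the same partite set of `D`. Then `u` and `v` do not `(1,2)`-compete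
in `D` if and only if `N⁺(u) ∪ N⁺(v) ⊆ X` for some partite set `X` of `D`. -/
theorem stmt0 {V ι : Type*} [Fintype V] [Fintype ι]
    (A : V → V → Prop) (p : V → ι) (hD : IsMultipartiteTournament A p)
    (u v : V) (huv : u ≠ v) (hsame : p u = p v)
    (hu : ∃ w, A u w) (hv : ∃ w, A v w) :
    ¬ OneTwoCompete A u v ↔
      ∃ i : ι, {w | A u w} ∪ {w | A v w} ⊆ {w | p w = i} := by
  obtain ⟨-, -, hintra, harc⟩ := hD
  have gen : ∀ a b w : V, p a = p b → A a w → ¬ OneTwoCompete A a b →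
      ∀ x, A b x → p x = p w := by
    intro a b w hab haw hnc x hbx
    by_contra hxw
    have hpaw : p a ≠ p w := fun h => hintra a w h haw
    have hpbx : p b ≠ p x := fun h => hintra b x h hbx
    have hwa : w ≠ a := fun h => hpaw (congrArg p h).symm
    have hwb : w ≠ b := fun h => hpaw (hab.trans (congrArg p h).symm)
    have hxb : x ≠ b := fun h => hpbx (congrArg p h).symm
    have hxa : x ≠ a := fun h => hpbx (hab.symm.trans (congrArg p h).symm)
    have hpxw : p x ≠ p w := hxw
    rcases (harc x w hpxw).1 with hxw' | hwx'
    · exact hnc ⟨w, hwa, hwb, Or.inl ⟨haw, x, hxa, hbx, hxw'⟩⟩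
    · exact hnc ⟨x, hxa, hxb, Or.inr ⟨hbx, w, hwb, haw, hwx'⟩⟩
  constructor
  · intro hnc
    obtain ⟨w, huw⟩ := hu
    obtain ⟨y, hvy⟩ := hv
    have hnc' : ¬ OneTwoCompete A v u := by
      rintro ⟨x, h1, h2, h3⟩
      exact hnc ⟨x, h2, h1, h3.symm⟩
    have key1 : ∀ x, A v x → p x = p w := gen u v w hsame huw hnc
    have key2 : ∀ x, A u x → p x = p y := gen v u y hsame.symm hvy hnc'
    refine ⟨p w, ?_⟩
    rintro x (hx | hx)
    · exact (key2 x hx).trans (key1 y hvy)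
    · exact key1 x hx
  · rintro ⟨i, hsub⟩ ⟨w, hwu, hwv, h⟩
    rcases h with ⟨huw, z, hz, hvz, hzw⟩ | ⟨hvw, z, hz, huz, hzw⟩
    · exact hintra z w ((hsub (Or.inr hvz)).trans (hsub (Or.inl huw)).symm) hzw
    · exact hintra z w ((hsub (Or.inl huz)).trans (hsub (Or.inr hvw)).symm) hzw
end

section
/- Let D be a multipartite tournament and let u and v be two non-sink vertices belonging to the same partite set of D. Then u and v are not adjacent in the (1,2)-step competition graph C_{1,2}(D) if and only if N⁺(u) ∩ N⁺(v) = ∅ and N⁺(u) ∪ N⁺(v) ⊆ X for some partite set X of D. -/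
/-- Let `D` be a multipartite tournament and let `u` and `v` be two non-sink
vertices belonging to the same partite set of `D`. Then `u` and `v` are not adjacent in
`C_{1,2}(D)` if and only if `N⁺(u) ∩ N⁺(v) = ∅` and `N⁺(u) ∪ N⁺(v) ⊆ X` for some partite
set `X` of `D`. -/
theorem stmt1 {V ι : Type*} [Fintype V] [Fintype ι]
    (A : V → V → Prop) (p : V → ι) (hD : IsMultipartiteTournament A p)
    (u v : V) (huv : u ≠ v) (hsame : p u = p v)
    (hu : ∃ w, A u w) (hv : ∃ w, A v w) :
    ¬ (compGraph A).Adj u v ↔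
      ({w | A u w} ∩ {w | A v w} = ∅ ∧
       ∃ i : ι, {w | A u w} ∪ {w | A v w} ⊆ {w | p w = i}) := by

  obtain ⟨-, -, hno, hor⟩ := hD
  have hne : ∀ {a b : V}, A a b → p a ≠ p b := fun h hp => hno _ _ hp h
  have hnself : ∀ {a b : V}, A a b → b ≠ a := by
    intro a b h he; subst he; exact hne h rfl
  have hneu : ∀ {b : V}, A v b → b ≠ u := by
    intro b h he; subst he; exact hne h hsame.symm
  have hnev : ∀ {a : V}, A u a → a ≠ v := by
    intro a h he; subst he; exact hne h hsame
  constructor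
  · intro hadj
    obtain ⟨a, ha⟩ := hu
    obtain ⟨b, hb⟩ := hv
    have hcross : ∀ a b : V, A u a → A v b → p a = p b := by
      intro a b ha hb
      by_contra hpab
      rcases (hor a b hpab).1 with hab | hba
      · exact hadj ⟨huv, b, hneu hb, hnself hb,
          Or.inr ⟨hb, Or.inr ⟨a, hnev ha, ha, hab⟩⟩⟩
      · exact hadj ⟨huv, a, hnself ha, hnev ha,
          Or.inl ⟨ha, Or.inr ⟨b, hneu hb, hb, hba⟩⟩⟩
    refine ⟨?_, p b, ?_⟩
    · ext w
      simp only [Set.mem_inter_iff, Set.mem_setOf_eq, Set.mem_empty_iff_false, iff_false,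
        not_and]
      intro h1 h2
      exact hadj ⟨huv, w, hnself h1, hnself h2, Or.inl ⟨h1, Or.inl h2⟩⟩
    · rintro w (hw | hw)
      · exact hcross w b hw hb
      · exact ((hcross a w ha hw).symm.trans (hcross a b ha hb))
  · rintro ⟨hint, i, hsub⟩ ⟨-, w, hwu, hwv, h⟩
    have hmem : ∀ {x : V}, A u x ∨ A v x → p x = i := fun hx => hsub hx
    rcases h with ⟨h1, h2 | ⟨z, hz, hvz, hzw⟩⟩ | ⟨h1, h2 | ⟨z, hz, huz, hzw⟩⟩
    · exact (Set.ext_iff.mp hint w).mp ⟨h1, h2⟩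
    · exact hno z w ((hmem (Or.inr hvz)).trans (hmem (Or.inl h1)).symm) hzw
    · exact (Set.ext_iff.mp hint w).mp ⟨h2, h1⟩
    · exact hno z w ((hmem (Or.inl huz)).trans (hmem (Or.inr h1)).symm) hzw
end

section
/- Let D be a digraph containing a directed cycle C of order ℓ for some ℓ ∈ {3,4}, and let X be a subset of V(D). Suppose that each vertex u in X − V(C) has two out-neighbors u₁ and u₂ on C such that both the (u₁,u₂)-section and the (u₂,u₁)-section of C have length at most 2. Then every vertex of X − V(C) is adjacent in C_{1,2}(D) to every other vertex of X. -/
lemma arith1 (l : ℕ) (hl : l = 3 ∨ l = 4) :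
    ∀ i j k : ZMod l, i ≠ j → (j-i).val ≤ 2 → (i-j).val ≤ 2 →
      (k = i ∨ k = j ∨ k = i+1 ∨ k = j+1) := by
  rcases hl with rfl | rfl <;> decide

lemma arith2 (l : ℕ) (hl : l = 3 ∨ l = 4) :
    ∀ i j k : ZMod l, i ≠ j → (j-i).val ≤ 2 → (i-j).val ≤ 2 →
      ∃ m : ZMod l, (m = i ∨ m = j) ∧ (m = k+1 ∨ m = k+2) := by
  rcases hl with rfl | rfl <;> decide

lemma arith3 (l : ℕ) (hl : l = 3 ∨ l = 4) :
    ∀ k : ZMod l, k + 1 ≠ k ∧ k + 2 ≠ k := by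
  rcases hl with rfl | rfl <;> decide

/-- Let `D` be a digraph containing a directed cycle `C` of order
`ℓ ∈ {3,4}` (with vertices `c 0, c 1, …` in cyclic order), and let `X ⊆ V(D)`. Suppose
each vertex `u ∈ X − V(C)` has two out-neighbors `c i`, `c j` on `C` such that both the
`(c i, c j)`-section and the `(c j, c i)`-section of `C` have length at most 2. Then every
vertex of `X − V(C)` is adjacent in `C_{1,2}(D)` to every other vertex of `X`. -/
theorem stmt16 {V : Type*} [Fintype V] (A : V → V → Prop) (hA : Irreflexive A)
    (l : ℕ) (hl : l = 3 ∨ l = 4) (c : ZMod l → V) (hinj : Function.Injective c)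
    (hcyc : ∀ i : ZMod l, A (c i) (c (i + 1)))
    (X : Set V)
    (hX : ∀ u ∈ X, (∀ i, c i ≠ u) →
      ∃ i j : ZMod l, i ≠ j ∧ A u (c i) ∧ A u (c j) ∧ (j - i).val ≤ 2 ∧ (i - j).val ≤ 2) :
    ∀ u ∈ X, (∀ i, c i ≠ u) → ∀ v ∈ X, v ≠ u → (compGraph A).Adj u v := by
  intro u hu hcu v hv hvu
  obtain ⟨i, j, hij, hui, huj, hd1, hd2⟩ := hX u hu hcu
  refine ⟨hvu.symm, ?_⟩
  by_cases hvc : ∀ k, c k ≠ v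
  · -- v off the cycle
    obtain ⟨i', j', hij', hvi, hvj', hd1', hd2'⟩ := hX v hv hvc
    refine ⟨c i', hcu i', hvc i', Or.inr ⟨hvi, ?_⟩⟩
    rcases arith1 l hl i j i' hij hd1 hd2 with rfl | rfl | rfl | rfl
    · exact Or.inl hui
    · exact Or.inl huj
    · exact Or.inr ⟨c i, hvc i, hui, hcyc i⟩
    · exact Or.inr ⟨c j, hvc j, huj, hcyc j⟩
  · push_neg at hvc
    obtain ⟨k, rfl⟩ := hvc
    obtain ⟨m, hm, hmk⟩ := arith2 l hl i j k hij hd1 hd2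
    have hAum : A u (c m) := by rcases hm with rfl | rfl; exacts [hui, huj]
    rcases hmk with rfl | rfl
    · exact ⟨c (k+1), hcu _, fun h => (arith3 l hl k).1 (hinj h),
        Or.inl ⟨hAum, Or.inl (hcyc k)⟩⟩
    · refine ⟨c (k+2), hcu _, fun h => (arith3 l hl k).2 (hinj h),
        Or.inl ⟨hAum, Or.inr ⟨c (k+1), hcu _, hcyc k, ?_⟩⟩⟩
      have := hcyc (k+1)
      rwa [show k+1+1 = k+2 by ring] at this
end
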